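/- Let G(n,a) be the graph obtained from K_{a,n-a} by removing a maximal matching. Then for all n ≥ 3 and 0 ≤ a ≤ n, F(G(n,a)) = C(n,a); and for n < 3, F(G(n,a)) = 1. -/

import Mathlib

def GDiff {V : Type*} (G : SimpleGraph V) (π σ : Equiv.Perm V) : Prop :=
  ∃ i, G.Adj (π i) (σ i)

noncomputable def famF {V : Type*} (G : SimpleGraph V) : ℕ :=
  sSup {k | ∃ S : Finset (Equiv.Perm V), S.card = k ∧
    (S : Set (Equiv.Perm V)).Pairwise (GDiff G)}

/-- `G(n,a)`: the complete bipartite graph `K_{a,n-a}` on `Fin n` (parts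
`{i : i < a}` and `{i : a ≤ i}`) minus the maximal matching consisting of the
`min (a, n-a)` edges `{i, i + a}` for `i < min (a, n-a)`. -/
def Gna (n a : ℕ) : SimpleGraph (Fin n) where
  Adj i j := (((i : ℕ) < a ∧ ¬ (j : ℕ) < a) ∨ ((j : ℕ) < a ∧ ¬ (i : ℕ) < a)) ∧
    (j : ℕ) ≠ (i : ℕ) + a ∧ (i : ℕ) ≠ (j : ℕ) + a
  symm := ⟨fun i j h => ⟨Or.symm h.1, h.2.2, h.2.1⟩⟩
  loopless := ⟨fun i h => by rcases h.1 with ⟨h1, h2⟩ | ⟨h1, h2⟩ <;> exact h2 h1⟩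

lemma gna_adj_iff {n a : ℕ} {i j : Fin n} : (Gna n a).Adj i j ↔
    (((i : ℕ) < a ∧ ¬ (j : ℕ) < a) ∨ ((j : ℕ) < a ∧ ¬ (i : ℕ) < a)) ∧
    (j : ℕ) ≠ (i : ℕ) + a ∧ (i : ℕ) ≠ (j : ℕ) + a := Iff.rfl

instance {n a : ℕ} (i j : Fin n) : Decidable ((Gna n a).Adj i j) :=
  decidable_of_iff _ gna_adj_iff.symm

instance {n a : ℕ} (π σ : Equiv.Perm (Fin n)) : Decidable (GDiff (Gna n a) π σ) := by
  unfold GDiff; exact Fintype.decidableExistsFintype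

/-! ### famF computation -/

lemma famF_eq {V : Type*} (G : SimpleGraph V) (k : ℕ)
    (hex : ∃ S : Finset (Equiv.Perm V), S.card = k ∧
      (S : Set (Equiv.Perm V)).Pairwise (GDiff G))
    (hub : ∀ S : Finset (Equiv.Perm V),
      (S : Set (Equiv.Perm V)).Pairwise (GDiff G) → S.card ≤ k) :
    famF G = k := by
  obtain ⟨S, hS, hp⟩ := hex
  have hmem : k ∈ {k | ∃ S : Finset (Equiv.Perm V), S.card = k ∧
      (S : Set (Equiv.Perm V)).Pairwise (GDiff G)} := ⟨S, hS, hp⟩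
  apply le_antisymm
  · apply csSup_le ⟨k, hmem⟩
    rintro b ⟨T, rfl, hT⟩
    exact hub T hT
  · apply le_csSup
    · exact ⟨k, by rintro b ⟨T, rfl, hT⟩; exact hub T hT⟩
    · exact hmem

/-! ### Upper bound -/

lemma upper {n a : ℕ} (ha : a ≤ n) (S : Finset (Equiv.Perm (Fin n)))
    (hp : (S : Set (Equiv.Perm (Fin n))).Pairwise (GDiff (Gna n a))) :
    S.card ≤ n.choose a := by
  classical
  set F : Equiv.Perm (Fin n) → Finset (Fin n) :=
    fun π => Finset.univ.filter (fun i => ((π i : Fin n) : ℕ) < a) with hF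
  have hsmall : (Finset.univ.filter fun v : Fin n => (v : ℕ) < a).card = a := by
    have : (Finset.univ.filter fun v : Fin n => (v : ℕ) < a)
        = Finset.univ.map (Fin.castLEEmb ha) := by
      ext v
      simp only [Finset.mem_filter, Finset.mem_univ, true_and, Finset.mem_map,
        Fin.castLEEmb_apply]
      constructor
      · intro h; exact ⟨⟨(v : ℕ), h⟩, Fin.ext rfl⟩
      · rintro ⟨u, rfl⟩; simp
    rw [this, Finset.card_map, Finset.card_univ, Fintype.card_fin]
  have hFim : ∀ π : Equiv.Perm (Fin n),
      F π = Finset.image π.symm (Finset.univ.filter fun v : Fin n => (v : ℕ) < a) := by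
    intro π
    ext i
    simp only [hF, Finset.mem_filter, Finset.mem_univ, true_and, Finset.mem_image]
    constructor
    · intro h; exact ⟨π i, h, π.symm_apply_apply i⟩
    · rintro ⟨v, hv, rfl⟩; rwa [π.apply_symm_apply]
  have hFcard : ∀ π : Equiv.Perm (Fin n), (F π).card = a := by
    intro π
    rw [hFim, Finset.card_image_of_injective _ π.symm.injective, hsmall]
  have hinjon : Set.InjOn F (S : Set (Equiv.Perm (Fin n))) := by
    intro π hπ σ hσ hfe
    by_contra hne
    obtain ⟨i, hadj⟩ := hp hπ hσ hne
    have hi := Finset.ext_iff.1 hfe i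
    simp only [hF, Finset.mem_filter, Finset.mem_univ, true_and] at hi
    rcases (gna_adj_iff.1 hadj).1 with ⟨h1, h2⟩ | ⟨h1, h2⟩
    · exact h2 (hi.1 h1)
    · exact h2 (hi.2 h1)
  have hsub : S.image F ⊆ Finset.powersetCard a Finset.univ := by
    intro T hT
    obtain ⟨π, _, rfl⟩ := Finset.mem_image.1 hT
    exact Finset.mem_powersetCard.2 ⟨Finset.subset_univ _, hFcard π⟩
  calc S.card = (S.image F).card := (Finset.card_image_of_injOn hinjon).symm
    _ ≤ (Finset.powersetCard a (Finset.univ : Finset (Fin n))).card :=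
        Finset.card_le_card hsub
    _ = n.choose a := by
        rw [Finset.card_powersetCard, Finset.card_univ, Fintype.card_fin]

/-! ### Extension of permutations -/

noncomputable def extPerm {m : ℕ} (f : Fin m → Fin (m+1)) (w : Fin (m+1))
    (hinj : Function.Injective f) (hw : ∀ v, f v ≠ w) (π : Equiv.Perm (Fin m)) :
    Equiv.Perm (Fin (m+1)) :=
  Equiv.ofBijective (fun i => if h : (i : ℕ) < m then f (π ⟨i, h⟩) else w)
    (Finite.injective_iff_bijective.1 (by
      intro i j hij
      dsimp only at hij
      split_ifs at hij with h1 h2 h2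
      · have h3 := π.injective (hinj hij)
        exact Fin.ext (Fin.mk_eq_mk.1 h3)
      · exact absurd hij (hw _)
      · exact absurd hij.symm (hw _)
      · exact Fin.ext (by omega)))

lemma extPerm_apply_last {m : ℕ} (f : Fin m → Fin (m+1)) (w : Fin (m+1))
    (hinj : Function.Injective f) (hw : ∀ v, f v ≠ w) (π : Equiv.Perm (Fin m)) :
    extPerm f w hinj hw π (Fin.last m) = w := dif_neg (by simp)

lemma extPerm_apply_lt {m : ℕ} (f : Fin m → Fin (m+1)) (w : Fin (m+1))
    (hinj : Function.Injective f) (hw : ∀ v, f v ≠ w) (π : Equiv.Perm (Fin m))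
    (v : Fin m) :
    extPerm f w hinj hw π ⟨(v : ℕ), Nat.lt_succ_of_lt v.2⟩ = f (π v) := dif_pos v.2

lemma extPerm_injective {m : ℕ} (f : Fin m → Fin (m+1)) (w : Fin (m+1))
    (hinj : Function.Injective f) (hw : ∀ v, f v ≠ w) :
    Function.Injective (extPerm f w hinj hw) := by
  intro π σ h
  apply Equiv.ext
  intro v
  apply hinj
  calc f (π v) = extPerm f w hinj hw π ⟨(v : ℕ), Nat.lt_succ_of_lt v.2⟩ :=
        (extPerm_apply_lt f w hinj hw π v).symm
    _ = extPerm f w hinj hw σ ⟨(v : ℕ), Nat.lt_succ_of_lt v.2⟩ := by rw [h]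
    _ = f (σ v) := extPerm_apply_lt f w hinj hw σ v

lemma extPerm_gdiff {m a' a : ℕ} {f : Fin m → Fin (m+1)} {w : Fin (m+1)}
    {hinj : Function.Injective f} {hw : ∀ v, f v ≠ w} {π σ : Equiv.Perm (Fin m)}
    (hpres : ∀ u v, (Gna m a').Adj u v → (Gna (m+1) a).Adj (f u) (f v))
    (h : GDiff (Gna m a') π σ) :
    GDiff (Gna (m+1) a) (extPerm f w hinj hw π) (extPerm f w hinj hw σ) := by
  obtain ⟨i, hi⟩ := h
  refine ⟨⟨(i : ℕ), Nat.lt_succ_of_lt i.2⟩, ?_⟩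
  rw [extPerm_apply_lt, extPerm_apply_lt]
  exact hpres _ _ hi

lemma extPerm_cross {m a : ℕ} {f g : Fin m → Fin (m+1)} {w w' : Fin (m+1)}
    {hinjf : Function.Injective f} {hwf : ∀ v, f v ≠ w}
    {hinjg : Function.Injective g} {hwg : ∀ v, g v ≠ w'}
    {π σ : Equiv.Perm (Fin m)} (hadj : (Gna (m+1) a).Adj w w') :
    GDiff (Gna (m+1) a) (extPerm f w hinjf hwf π) (extPerm g w' hinjg hwg σ) := by
  refine ⟨Fin.last m, ?_⟩
  rw [extPerm_apply_last, extPerm_apply_last]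
  exact hadj

/-! ### The two value-embeddings -/

def gU (a x : ℕ) : ℕ := if x < a - 1 then x else x + 1

def gB (a x : ℕ) : ℕ :=
  if x < a - 2 then x
  else if x = a - 2 then a - 1
  else if x = 2*a - 3 then 2*a - 1
  else if x = 2*a - 2 then 2*a - 2
  else x + 1

lemma step_embed (n a : ℕ) (h3 : 3 ≤ n) (ha1 : 1 ≤ a) (han : a ≤ n) :
    ∃ (f : Fin n → Fin (n+1)) (lam : Fin (n+1))
      (hinj : Function.Injective f) (hw : ∀ v, f v ≠ lam),
      (∀ u v, (Gna n (a-1)).Adj u v → (Gna (n+1) a).Adj (f u) (f v)) ∧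
      (Gna (n+1) a).Adj lam (Fin.last n) ∧ ((lam : ℕ) < a) := by
  by_cases hbal : n + 1 = 2*a
  · refine ⟨fun v => ⟨gB a v.1, ?_⟩, ⟨a - 2, by omega⟩, ?_, ?_, ?_, ?_, ?_⟩
    · have hv := v.2; unfold gB; split_ifs <;> omega
    · intro u v h
      apply Fin.ext
      have h' : gB a u.1 = gB a v.1 := Fin.mk_eq_mk.1 h
      have hu := u.2; have hv := v.2
      unfold gB at h'; split_ifs at h' <;> omega
    · intro v
      apply Fin.ne_of_val_ne
      have hv := v.2
      show gB a v.1 ≠ a - 2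
      unfold gB; split_ifs <;> omega
    · intro u v h
      have hu := u.2; have hv := v.2
      obtain ⟨hs, h1, h2⟩ := gna_adj_iff.1 h
      refine gna_adj_iff.2 ?_
      show ((gB a u.1 < a ∧ ¬ gB a v.1 < a) ∨ (gB a v.1 < a ∧ ¬ gB a u.1 < a)) ∧
        gB a v.1 ≠ gB a u.1 + a ∧ gB a u.1 ≠ gB a v.1 + a
      unfold gB; split_ifs <;> omega
    · refine gna_adj_iff.2 ?_
      show ((a - 2 < a ∧ ¬ n < a) ∨ (n < a ∧ ¬ a - 2 < a)) ∧
        n ≠ (a - 2) + a ∧ (a - 2) ≠ n + a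
      omega
    · show a - 2 < a; omega
  · refine ⟨fun v => ⟨gU a v.1, ?_⟩, ⟨a - 1, by omega⟩, ?_, ?_, ?_, ?_, ?_⟩
    · have hv := v.2; unfold gU; split_ifs <;> omega
    · intro u v h
      apply Fin.ext
      have h' : gU a u.1 = gU a v.1 := Fin.mk_eq_mk.1 h
      have hu := u.2; have hv := v.2
      unfold gU at h'; split_ifs at h' <;> omega
    · intro v
      apply Fin.ne_of_val_ne
      have hv := v.2
      show gU a v.1 ≠ a - 1
      unfold gU; split_ifs <;> omega
    · intro u v h
      have hu := u.2; have hv := v.2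
      obtain ⟨hs, h1, h2⟩ := gna_adj_iff.1 h
      refine gna_adj_iff.2 ?_
      show ((gU a u.1 < a ∧ ¬ gU a v.1 < a) ∨ (gU a v.1 < a ∧ ¬ gU a u.1 < a)) ∧
        gU a v.1 ≠ gU a u.1 + a ∧ gU a u.1 ≠ gU a v.1 + a
      unfold gU; split_ifs <;> omega
    · refine gna_adj_iff.2 ?_
      show ((a - 1 < a ∧ ¬ n < a) ∨ (n < a ∧ ¬ a - 1 < a)) ∧
        n ≠ (a - 1) + a ∧ (a - 1) ≠ n + a
      omega
    · show a - 1 < a; omega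

lemma castSucc_pres {n a : ℕ} : ∀ u v : Fin n, (Gna n a).Adj u v →
    (Gna (n+1) a).Adj (Fin.castSucc u) (Fin.castSucc v) := by
  intro u v h
  obtain ⟨hs, h1, h2⟩ := gna_adj_iff.1 h
  refine gna_adj_iff.2 ?_
  simp only [Fin.coe_castSucc]
  exact ⟨hs, h1, h2⟩

lemma exists_fam : ∀ n, 3 ≤ n → ∀ a, a ≤ n →
    ∃ S : Finset (Equiv.Perm (Fin n)), S.card = n.choose a ∧
      (S : Set (Equiv.Perm (Fin n))).Pairwise (GDiff (Gna n a)) := by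
  intro n hn
  induction n, hn using Nat.le_induction with
  | base =>
    intro a ha
    have hrot : ∀ a : ℕ, a = 1 ∨ a = 2 →
        ∃ S : Finset (Equiv.Perm (Fin 3)), S.card = Nat.choose 3 a ∧
          (S : Set (Equiv.Perm (Fin 3))).Pairwise (GDiff (Gna 3 a)) := by
      intro a haa
      refine ⟨Finset.univ.map ⟨fun k : Fin 3 => Equiv.addRight k, ?_⟩, ?_, ?_⟩
      · intro k l h
        simpa using DFunLike.congr_fun h 0
      · rcases haa with rfl | rfl <;> simp
      · intro x hx y hy hne
        simp only [Finset.coe_map, Set.mem_image, Finset.mem_coe, Finset.mem_univ,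
          true_and, Function.Embedding.coeFn_mk, Set.mem_range] at hx hy
        obtain ⟨k, rfl⟩ := hx
        obtain ⟨l, rfl⟩ := hy
        have hkl : k ≠ l := fun h => hne (by rw [h])
        rcases haa with rfl | rfl <;>
          fin_cases k <;> fin_cases l <;> first | (exact absurd rfl hkl) | decide
    interval_cases a
    · exact ⟨{1}, by simp, by rw [Finset.coe_singleton]; exact Set.pairwise_singleton _ _⟩
    · exact hrot 1 (Or.inl rfl)
    · exact hrot 2 (Or.inr rfl)
    · exact ⟨{1}, by simp, by rw [Finset.coe_singleton]; exact Set.pairwise_singleton _ _⟩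
  | succ n hn IH =>
    intro a ha
    by_cases ha0 : a = 0
    · subst ha0
      exact ⟨{1}, by simp, by rw [Finset.coe_singleton]; exact Set.pairwise_singleton _ _⟩
    by_cases han1 : a = n + 1
    · subst han1
      exact ⟨{1}, by simp [Nat.choose_self],
        by rw [Finset.coe_singleton]; exact Set.pairwise_singleton _ _⟩
    have ha1 : 1 ≤ a := by omega
    have han : a ≤ n := by omega
    obtain ⟨S₁, hc₁, hp₁⟩ := IH (a - 1) (by omega)
    obtain ⟨S₂, hc₂, hp₂⟩ := IH a han
    obtain ⟨f, lam, hinj, hw, hpres, hcross, hlam⟩ := step_embed n a hn ha1 han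
    have hlam_ne_last : lam ≠ Fin.last n := by
      apply Fin.ne_of_val_ne
      simp only [Fin.val_last]
      omega
    have hcastinj : Function.Injective (Fin.castSucc : Fin n → Fin (n+1)) :=
      Fin.castSucc_injective n
    have hcastne : ∀ v : Fin n, Fin.castSucc v ≠ Fin.last n :=
      fun v => (Fin.castSucc_lt_last v).ne
    classical
    refine ⟨S₁.image (extPerm f lam hinj hw) ∪
      S₂.image (extPerm Fin.castSucc (Fin.last n) hcastinj hcastne), ?_, ?_⟩
    · have hdisj : Disjoint (S₁.image (extPerm f lam hinj hw))
          (S₂.image (extPerm Fin.castSucc (Fin.last n) hcastinj hcastne)) := by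
        rw [Finset.disjoint_left]
        rintro x hx1 hx2
        obtain ⟨π, _, rfl⟩ := Finset.mem_image.1 hx1
        obtain ⟨σ, _, hx⟩ := Finset.mem_image.1 hx2
        have h1 : extPerm f lam hinj hw π (Fin.last n) = lam :=
          extPerm_apply_last _ _ _ _ _
        have h2 : extPerm Fin.castSucc (Fin.last n) hcastinj hcastne σ (Fin.last n)
            = Fin.last n := extPerm_apply_last _ _ _ _ _
        rw [hx] at h2
        rw [h1] at h2
        exact hlam_ne_last h2
      rw [Finset.card_union_of_disjoint hdisj,
        Finset.card_image_of_injective _ (extPerm_injective f lam hinj hw),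
        Finset.card_image_of_injective _ (extPerm_injective _ _ hcastinj hcastne),
        hc₁, hc₂]
      obtain ⟨b, rfl⟩ : ∃ b, a = b + 1 := ⟨a - 1, by omega⟩
      simpa using (Nat.choose_succ_succ n b).symm
    · intro x hx y hy hne
      simp only [Finset.coe_union, Set.mem_union, Finset.mem_coe, Finset.mem_image] at hx hy
      rcases hx with ⟨π, hπ, rfl⟩ | ⟨π, hπ, rfl⟩ <;> rcases hy with ⟨σ, hσ, rfl⟩ | ⟨σ, hσ, rfl⟩
      · exact extPerm_gdiff hpres
          (hp₁ (Finset.mem_coe.2 hπ) (Finset.mem_coe.2 hσ) (fun h => hne (by rw [h])))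
      · exact extPerm_cross hcross
      · exact extPerm_cross hcross.symm
      · exact extPerm_gdiff castSucc_pres
          (hp₂ (Finset.mem_coe.2 hπ) (Finset.mem_coe.2 hσ) (fun h => hne (by rw [h])))

lemma no_adj_small {n a : ℕ} (hn : n < 3) (i j : Fin n) : ¬ (Gna n a).Adj i j := by
  intro h
  obtain ⟨hs, h1, h2⟩ := gna_adj_iff.1 h
  have hi := i.2; have hj := j.2
  interval_cases n <;> omega

theorem stmt4 (n a : ℕ) (ha : a ≤ n) :
    (3 ≤ n → famF (Gna n a) = n.choose a) ∧ (n < 3 → famF (Gna n a) = 1) := by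
  constructor
  · intro h3
    exact famF_eq _ _ (exists_fam n h3 a ha) (fun S hp => upper ha S hp)
  · intro hlt
    apply famF_eq _ _
      ⟨{1}, by simp, by rw [Finset.coe_singleton]; exact Set.pairwise_singleton _ _⟩
    intro S hp
    apply Finset.card_le_one.2
    intro x hx y hy
    by_contra hne
    obtain ⟨i, hadj⟩ := hp (Finset.mem_coe.2 hx) (Finset.mem_coe.2 hy) hne
    exact no_adj_small hlt _ _ hadj
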